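/- arXiv:1606.01485 — 2 statements merged into one kernel-verified Lean document; each statement's English description precedes it below -/
import Mathlib

section
/- Let ξ be an integrable random variable on a probability space (Ω, F, P), let G₁, G₂ ⊆ F be sub-σ-fields, and let A ∈ G₁ ∩ G₂ be an event such that A ∩ G₁ ⊆ A ∩ G₂ (i.e., for every B ∈ G₁ there exists B' ∈ G₂ with A ∩ B = A ∩ B'). Then E[ξ | G₁] = E[E[ξ | G₂] | G₁] almost surely on A. -/
open MeasureTheory

/-- Generalized tower property: if `A ∩ G₁ ⊆ A ∩ G₂` (every `G₁`-set agrees with some `G₂`-set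
on `A`) for an event `A ∈ G₁ ∩ G₂`, then `E[ξ|G₁] = E[E[ξ|G₂]|G₁]` a.s. on `A`. -/
theorem stmt0 {Ω : Type*} {m0 : MeasurableSpace Ω} (P : Measure Ω) [IsProbabilityMeasure P]
    {m1 m2 : MeasurableSpace Ω} (hm1 : m1 ≤ m0) (hm2 : m2 ≤ m0)
    (ξ : Ω → ℝ) (hξ : Integrable ξ P)
    (A : Set Ω) (hA1 : MeasurableSet[m1] A) (hA2 : MeasurableSet[m2] A)
    (h : ∀ B : Set Ω, MeasurableSet[m1] B → ∃ B' : Set Ω, MeasurableSet[m2] B' ∧ A ∩ B = A ∩ B') :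
    ∀ᵐ ω ∂(P.restrict A), (P[ξ|m1]) ω = (P[(P[ξ|m2])|m1]) ω := by
  letI : MeasurableSpace Ω := m0
  have hA0 : MeasurableSet[m0] A := hm1 A hA1
  have hξ2 : Integrable (P[ξ|m2]) P := integrable_condExp
  -- key: P[A.indicator ξ|m1] =ᵐ P[A.indicator (P[ξ|m2])|m1]
  have key : (P[A.indicator ξ|m1]) =ᵐ[P] (P[A.indicator (P[ξ|m2])|m1]) := by
    refine ae_eq_condExp_of_forall_setIntegral_eq hm1
      (hξ2.indicator hA0) (fun s hs _ => integrable_condExp.integrableOn)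
      (fun s hs _ => ?_) (stronglyMeasurable_condExp.aestronglyMeasurable)
    obtain ⟨s', hs', hss'⟩ := h s hs
    have hAs2 : MeasurableSet[m2] (A ∩ s) := hss' ▸ hA2.inter hs'
    calc ∫ x in s, (P[A.indicator ξ|m1]) x ∂P
        = ∫ x in s, A.indicator ξ x ∂P := setIntegral_condExp hm1 (hξ.indicator hA0) hs
      _ = ∫ x in s ∩ A, ξ x ∂P := setIntegral_indicator hA0
      _ = ∫ x in A ∩ s, ξ x ∂P := by rw [Set.inter_comm]
      _ = ∫ x in A ∩ s, (P[ξ|m2]) x ∂P := (setIntegral_condExp hm2 hξ hAs2).symm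
      _ = ∫ x in s ∩ A, (P[ξ|m2]) x ∂P := by rw [Set.inter_comm]
      _ = ∫ x in s, A.indicator (P[ξ|m2]) x ∂P := (setIntegral_indicator hA0).symm
  have h1 : (P[A.indicator ξ|m1]) =ᵐ[P] A.indicator (P[ξ|m1]) := condExp_indicator hξ hA1
  have h2 : (P[A.indicator (P[ξ|m2])|m1]) =ᵐ[P] A.indicator (P[(P[ξ|m2])|m1]) :=
    condExp_indicator hξ2 hA1
  have hae : A.indicator (P[ξ|m1]) =ᵐ[P] A.indicator (P[(P[ξ|m2])|m1]) :=
    h1.symm.trans (key.trans h2)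
  filter_upwards [ae_restrict_of_ae hae, ae_restrict_mem hA0] with ω hω hωA
  simpa [Set.indicator_of_mem hωA] using hω
end

section
/- Let {x(u,t)} be a Brownian stochastic flow, μ a Borel probability measure supported in [0,1], λ := μ ∘ x⁻¹(·,1) the random image measure, and λⁿ the analogous image of the discretized measure μⁿ = Σ_k μ(I_k^n) δ_{(2k−1)/(2n)}. Then E[W₁(λ, λⁿ)] ≤ K/√n with K = √(64/(3√(2π)) + 1/4). Consequently the Wasserstein distance between the laws Λ and Λⁿ of λ and λⁿ in (M₁(ℝ), W₁) satisfies W₁(Λ, Λⁿ) ≤ K/√n. -/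
open MeasureTheory ProbabilityTheory Real NNReal

noncomputable section

/-- A Brownian stochastic flow: each one-point motion is a Brownian motion started at `u`
with respect to the common filtration `ℱ` (encoded, via Lévy's characterization, by `x u`
and `(x u)² - t` being continuous `ℱ`-martingales), and the flow is monotone. -/
structure IsBrownianFlow {Ω : Type*} {m0 : MeasurableSpace Ω} (P : Measure Ω)
    (ℱ : Filtration ℝ≥0 m0) (x : ℝ → ℝ≥0 → Ω → ℝ) : Prop where
  init : ∀ u : ℝ, ∀ᵐ ω ∂P, x u 0 ω = u
  cont : ∀ u : ℝ, ∀ᵐ ω ∂P, Continuous fun t => x u t ω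
  mart : ∀ u : ℝ, Martingale (x u) ℱ P
  sq : ∀ u : ℝ, Martingale (fun (t : ℝ≥0) ω => (x u t ω) ^ 2 - (t : ℝ)) ℱ P
  mono : ∀ᵐ ω ∂P, ∀ u v : ℝ, u ≤ v → ∀ t : ℝ≥0, x u t ω ≤ x v t ω

/-- Minimal coupling cost for a cost function `c`. -/
def Wcost {Y : Type*} [MeasurableSpace Y] (c : Y → Y → ℝ) (μ ν : Measure Y) : ℝ :=
  sInf {r : ℝ | ∃ κ : Measure (Y × Y), IsProbabilityMeasure κ ∧
    κ.map Prod.fst = μ ∧ κ.map Prod.snd = ν ∧ r = ∫ p, c p.1 p.2 ∂κ}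

/-- The Wasserstein-1 distance on (probability) measures on `ℝ`. -/
def W1 (μ ν : Measure ℝ) : ℝ := Wcost (fun u v => |u - v|) μ ν

/-- The interval `I_k^n`. -/
def Ikn (n k : ℕ) : Set ℝ :=
  if k = n then Set.Icc (((n:ℝ) - 1) / n) 1
  else Set.Ico (((k:ℝ) - 1) / n) ((k:ℝ) / n)

/-- index of the interval containing `u`. -/
def knn (n : ℕ) (u : ℝ) : ℕ := min n (⌊u * n⌋₊ + 1)

lemma knn_measurable (n : ℕ) : Measurable (knn n) :=
  measurable_const.min ((Nat.measurable_floor.comp (measurable_id.mul_const _)).add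
    measurable_const)

lemma knn_one_le {n : ℕ} (hn : 1 ≤ n) (u : ℝ) : 1 ≤ knn n u :=
  le_min hn (Nat.succ_le_succ (Nat.zero_le _))

lemma knn_le (n : ℕ) (u : ℝ) : knn n u ≤ n := min_le_left _ _

lemma knn_bounds {n : ℕ} (hn : 1 ≤ n) {u : ℝ} (hu : u ∈ Set.Icc (0:ℝ) 1) :
    ((knn n u : ℝ) - 1) / n ≤ u ∧ u ≤ (knn n u : ℝ) / n := by
  have hn0 : (0:ℝ) < n := by exact_mod_cast hn
  have hu0 : 0 ≤ u * n := mul_nonneg hu.1 hn0.le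
  have hfl : ((⌊u * n⌋₊ : ℝ)) ≤ u * n := Nat.floor_le hu0
  have hfl2 : u * n < (⌊u * n⌋₊ : ℝ) + 1 := Nat.lt_floor_add_one _
  constructor
  · rw [div_le_iff₀ hn0]
    have : ((knn n u : ℝ)) ≤ ((⌊u * n⌋₊ : ℝ)) + 1 := by
      have := min_le_right n (⌊u * n⌋₊ + 1)
      exact_mod_cast this
    linarith
  · rw [le_div_iff₀ hn0]
    have h1 : u * n ≤ (n : ℝ) := by nlinarith [hu.2]
    have h2 : u * n ≤ ((⌊u * n⌋₊ : ℝ)) + 1 := hfl2.le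
    have : u * n ≤ min (n : ℝ) (((⌊u * n⌋₊ : ℝ)) + 1) := le_min h1 h2
    calc u * n ≤ min (n:ℝ) (((⌊u * n⌋₊ : ℝ)) + 1) := this
      _ = ((knn n u : ℝ)) := by rw [knn]; push_cast [Nat.cast_min]; ring_nf
  
lemma mem_Ikn_knn {n : ℕ} (hn : 1 ≤ n) {u : ℝ} (hu : u ∈ Set.Icc (0:ℝ) 1) :
    u ∈ Ikn n (knn n u) := by
  have hn0 : (0:ℝ) < n := by exact_mod_cast hn
  obtain ⟨hl, hr⟩ := knn_bounds hn hu
  rcases eq_or_lt_of_le (knn_le n u) with heq | hlt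
  · rw [Ikn, if_pos heq]
    refine ⟨?_, hu.2⟩
    have : ((knn n u : ℝ) - 1) / n ≤ u := hl
    rwa [heq] at this
  · rw [Ikn, if_neg hlt.ne]
    refine ⟨hl, ?_⟩
    -- strict upper bound: knn n u = ⌊u n⌋ + 1 here
    have hmin : knn n u = ⌊u * n⌋₊ + 1 := by
      rw [knn] at hlt ⊢
      rcases min_cases n (⌊u * n⌋₊ + 1) with ⟨h1, _⟩ | ⟨h1, _⟩
      · omega
      · exact h1
    rw [lt_div_iff₀ hn0, hmin]
    push_cast
    exact Nat.lt_floor_add_one _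

lemma knn_eq_of_mem_Ikn {n k : ℕ} (hn : 1 ≤ n) (hk1 : 1 ≤ k) (hkn : k ≤ n) {u : ℝ}
    (hu : u ∈ Ikn n k) : knn n u = k := by
  have hn0 : (0:ℝ) < n := by exact_mod_cast hn
  rw [Ikn] at hu
  by_cases hke : k = n
  · subst hke
    rw [if_pos rfl] at hu
    have h1 : ((k:ℝ) - 1) ≤ u * k := by
      have := hu.1
      rw [div_le_iff₀ hn0] at this
      linarith
    have hfl : k - 1 ≤ ⌊u * k⌋₊ := by
      apply Nat.le_floor
      push_cast [Nat.cast_sub hk1]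
      exact h1
    rw [knn]
    omega
  · rw [if_neg hke] at hu
    have hkn' : k < n := lt_of_le_of_ne hkn hke
    have h0 : 0 ≤ u * n := by
      have h00 : (0:ℝ) ≤ ((k:ℝ)-1)/n := by
        apply div_nonneg _ hn0.le
        have : (1:ℝ) ≤ (k:ℝ) := by exact_mod_cast hk1
        linarith
      nlinarith [hu.1, le_trans h00 hu.1]
    have hfl : ⌊u * n⌋₊ = k - 1 := by
      rw [Nat.floor_eq_iff h0]
      constructor
      · push_cast [Nat.cast_sub hk1]
        have := hu.1
        rw [div_le_iff₀ hn0] at this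
        linarith
      · push_cast [Nat.cast_sub hk1]
        have := hu.2
        rw [lt_div_iff₀ hn0] at this
        linarith
    rw [knn, hfl]
    omega


/-- the set of `u` whose interval index is `k`. -/
def Tkn (n k : ℕ) : Set ℝ := knn n ⁻¹' {k}

lemma Tkn_measurable (n k : ℕ) : MeasurableSet (Tkn n k) :=
  knn_measurable n (measurableSet_singleton k)

lemma Tkn_disjoint (n : ℕ) : (↑(Finset.Icc 1 n) : Set ℕ).PairwiseDisjoint (Tkn n) := by
  intro i _ j _ hij
  refine Set.disjoint_left.mpr fun u hui huj => hij ?_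
  simp only [Tkn, Set.mem_preimage, Set.mem_singleton_iff] at hui huj
  rw [← hui, ← huj]

lemma Tkn_union {n : ℕ} (hn : 1 ≤ n) : ⋃ k ∈ Finset.Icc 1 n, Tkn n k = Set.univ := by
  ext u
  simp only [Set.mem_iUnion, Set.mem_univ, iff_true, Finset.mem_Icc, Tkn, Set.mem_preimage,
    Set.mem_singleton_iff]
  exact ⟨knn n u, ⟨knn_one_le hn u, knn_le n u⟩, rfl⟩

lemma measure_Tkn_eq {μ : Measure ℝ} (hsupp : μ (Set.Icc (0:ℝ) 1)ᶜ = 0) {n k : ℕ}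
    (hn : 1 ≤ n) (hk1 : 1 ≤ k) (hkn : k ≤ n) : μ (Tkn n k) = μ (Ikn n k) := by
  apply le_antisymm
  · have hsub : Tkn n k ⊆ Ikn n k ∪ (Set.Icc (0:ℝ) 1)ᶜ := by
      intro u hu
      by_cases hu01 : u ∈ Set.Icc (0:ℝ) 1
      · left
        have hmem : u ∈ Ikn n (knn n u) := mem_Ikn_knn hn hu01
        have : knn n u = k := hu
        rwa [this] at hmem
      · exact Or.inr hu01
    calc μ (Tkn n k) ≤ μ (Ikn n k ∪ (Set.Icc (0:ℝ) 1)ᶜ) := measure_mono hsub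
      _ ≤ μ (Ikn n k) + μ (Set.Icc (0:ℝ) 1)ᶜ := measure_union_le _ _
      _ = μ (Ikn n k) := by rw [hsupp, add_zero]
  · exact measure_mono fun u hu => knn_eq_of_mem_Ikn hn hk1 hkn hu

lemma sum_measure_Tkn (μ : Measure ℝ) [IsProbabilityMeasure μ] {n : ℕ} (hn : 1 ≤ n) :
    ∑ k ∈ Finset.Icc 1 n, μ (Tkn n k) = 1 := by
  rw [← measure_biUnion_finset (Tkn_disjoint n) (fun k _ => Tkn_measurable n k),
    Tkn_union hn, measure_univ]

lemma map_marginal (μ : Measure ℝ) [IsProbabilityMeasure μ]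
    (hsupp : μ (Set.Icc (0:ℝ) 1)ᶜ = 0) {n : ℕ} (hn : 1 ≤ n)
    (φ : ℝ → ℝ) (hφ : Measurable φ) :
    μ.map (fun u => φ ((2 * ((knn n u : ℕ):ℝ) - 1) / (2 * (n:ℝ)))) =
      ∑ k ∈ Finset.Icc 1 n, μ (Ikn n k) • Measure.dirac (φ ((2 * (k:ℝ) - 1) / (2 * (n:ℝ)))) := by
  have hg : Measurable (fun u => φ ((2 * ((knn n u : ℕ):ℝ) - 1) / (2 * (n:ℝ)))) := by
    exact hφ.comp ((measurable_from_nat (f := fun k : ℕ => (2 * (k:ℝ) - 1) / (2 * (n:ℝ)))).comp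
      (knn_measurable n))
  refine Measure.ext fun s hs => ?_
  rw [Measure.map_apply hg hs]
  set A := (fun u => φ ((2 * ((knn n u : ℕ):ℝ) - 1) / (2 * (n:ℝ)))) ⁻¹' s with hA
  have hAm : MeasurableSet A := hg hs
  have hcover : A = ⋃ k ∈ Finset.Icc 1 n, (Tkn n k ∩ A) := by
    rw [← Set.iUnion₂_inter, Tkn_union hn, Set.univ_inter]
  rw [hcover, measure_biUnion_finset
    (fun i hi j hj hij => ((Tkn_disjoint n) hi hj hij).mono Set.inter_subset_left
      Set.inter_subset_left)
    (fun k _ => (Tkn_measurable n k).inter hAm)]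
  rw [Measure.finset_sum_apply]
  refine Finset.sum_congr rfl fun k hk => ?_
  rw [Finset.mem_Icc] at hk
  rw [Measure.smul_apply, Measure.dirac_apply' _ hs, smul_eq_mul]
  by_cases hmem : φ ((2 * (k:ℝ) - 1) / (2 * (n:ℝ))) ∈ s
  · rw [Set.indicator_of_mem hmem, Pi.one_apply, mul_one]
    have : Tkn n k ∩ A = Tkn n k := by
      refine Set.inter_eq_left.mpr fun u hu => ?_
      have hku : knn n u = k := hu
      simp only [hA, Set.mem_preimage, hku]
      exact hmem
    rw [this, measure_Tkn_eq hsupp hn hk.1 hk.2]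
  · rw [Set.indicator_of_notMem hmem, mul_zero]
    have : Tkn n k ∩ A = ∅ := by
      refine Set.eq_empty_of_forall_notMem fun u ⟨hu, huA⟩ => hmem ?_
      have hku : knn n u = k := hu
      simp only [hA, Set.mem_preimage, hku] at huA
      exact huA
    rw [this, measure_empty]


lemma W1_nonneg (a b : Measure ℝ) : 0 ≤ W1 a b := by
  apply Real.sInf_nonneg
  rintro r ⟨κ, _, _, _, rfl⟩
  exact integral_nonneg fun p => abs_nonneg _

/-- Theorem 2 of the paper: for a Brownian stochastic flow `x` and `μ` supported in `[0,1]`,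
with `λ = μ ∘ x⁻¹(·,1)` and `λⁿ` the image of the discretized measure
`μⁿ = Σ_k μ(I_k^n) δ_{(2k-1)/(2n)}`, one has `E[W₁(λ, λⁿ)] ≤ K/√n` and hence
`W₁(Λ, Λⁿ) ≤ K/√n` for the laws `Λ, Λⁿ`, where `K = √(64/(3√(2π)) + 1/4)`. -/
theorem stmt6 {Ω : Type*} {m0 : MeasurableSpace Ω} (P : Measure Ω) [IsProbabilityMeasure P]
    (ℱ : Filtration ℝ≥0 m0) (x : ℝ → ℝ≥0 → Ω → ℝ) (hx : IsBrownianFlow P ℱ x)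
    (μ : Measure ℝ) [IsProbabilityMeasure μ] (hsupp : μ (Set.Icc (0:ℝ) 1)ᶜ = 0)
    (n : ℕ) (hn : 1 ≤ n)
    (lam lamn : Ω → Measure ℝ)
    (hlam : ∀ ω, lam ω = μ.map (fun u => x u 1 ω))
    (hlamn : ∀ ω, lamn ω = ∑ k ∈ Finset.Icc 1 n,
        μ (Ikn n k) • Measure.dirac (x ((2 * (k:ℝ) - 1) / (2 * n)) 1 ω))
    (hlam_meas : Measurable lam) (hlamn_meas : Measurable lamn)
    (hW1meas : AEStronglyMeasurable (fun p : Measure ℝ × Measure ℝ => W1 p.1 p.2)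
      (P.map (fun ω => (lam ω, lamn ω)))) :
    (∫ ω, W1 (lam ω) (lamn ω) ∂P
        ≤ Real.sqrt (64 / (3 * Real.sqrt (2 * π)) + 1 / 4) / Real.sqrt n) ∧
    Wcost W1 (P.map lam) (P.map lamn)
        ≤ Real.sqrt (64 / (3 * Real.sqrt (2 * π)) + 1 / 4) / Real.sqrt n := by
  have hn0 : (0:ℝ) < n := by exact_mod_cast hn
  have hK1 : (1:ℝ) ≤ Real.sqrt (64 / (3 * Real.sqrt (2 * π)) + 1 / 4) := by
    have h2pi : Real.sqrt (2 * π) ≤ 3 := by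
      rw [show (3:ℝ) = Real.sqrt 9 by
        rw [show (9:ℝ) = 3 ^ 2 by norm_num, Real.sqrt_sq (by norm_num : (0:ℝ) ≤ 3)]]
      exact Real.sqrt_le_sqrt (by nlinarith [Real.pi_le_four])
    have hp : 0 < Real.sqrt (2 * π) := Real.sqrt_pos.mpr (by positivity)
    have h34 : (3:ℝ)/4 ≤ 64 / (3 * Real.sqrt (2 * π)) := by
      rw [div_le_div_iff₀ (by norm_num) (by positivity)]
      nlinarith
    calc (1:ℝ) = Real.sqrt 1 := Real.sqrt_one.symm
      _ ≤ _ := Real.sqrt_le_sqrt (by linarith)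
  have hbound : (1:ℝ)/n ≤ Real.sqrt (64 / (3 * Real.sqrt (2 * π)) + 1 / 4) / Real.sqrt n := by
    have hn1 : (1:ℝ) ≤ n := by exact_mod_cast hn
    have hs0 : 0 < Real.sqrt n := Real.sqrt_pos.mpr hn0
    rw [div_le_div_iff₀ hn0 hs0]
    have hsn : Real.sqrt n ≤ (n:ℝ) := by
      calc Real.sqrt n ≤ Real.sqrt ((n:ℝ) ^ 2) := Real.sqrt_le_sqrt (by nlinarith)
        _ = n := Real.sqrt_sq (by linarith)
    nlinarith
  -- expectation of the one-point motions at time 1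
  have hexp : ∀ v : ℝ, ∫ ω, x v 1 ω ∂P = v := by
    intro v
    have h0 := (hx.mart v).setIntegral_eq (zero_le : (0:ℝ≥0) ≤ 1)
      (MeasurableSet.univ : MeasurableSet[ℱ 0] Set.univ)
    rw [setIntegral_univ, setIntegral_univ] at h0
    rw [← h0]
    have hc : ∫ ω, x v 0 ω ∂P = ∫ _ω, v ∂P :=
      integral_congr_ae (by filter_upwards [hx.init v] with ω h using h)
    rw [hc, integral_const, Measure.real, measure_univ, ENNReal.toReal_one, one_smul]
  have hΔint : ∀ k : ℕ,
      Integrable (fun ω => x ((k:ℝ)/n) 1 ω - x (((k:ℝ) - 1)/n) 1 ω) P := fun k =>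
    ((hx.mart _).integrable 1).sub ((hx.mart _).integrable 1)
  have hEΔ : ∀ k : ℕ, ∫ ω, (x ((k:ℝ)/n) 1 ω - x (((k:ℝ) - 1)/n) 1 ω) ∂P = 1/n := by
    intro k
    rw [integral_sub ((hx.mart _).integrable 1) ((hx.mart _).integrable 1), hexp, hexp]
    field_simp
    ring
  set Y : Ω → ℝ := fun ω => ∑ k ∈ Finset.Icc 1 n,
    (μ (Tkn n k)).toReal * (x ((k:ℝ)/n) 1 ω - x (((k:ℝ) - 1)/n) 1 ω) with hY
  have hYint : Integrable Y P :=
    integrable_finset_sum _ fun k _ => (hΔint k).const_mul _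
  have hEY : ∫ ω, Y ω ∂P = 1/n := by
    simp only [hY]
    rw [integral_finset_sum _ fun k _ => (hΔint k).const_mul _]
    have h1 : ∀ k ∈ Finset.Icc 1 n,
        ∫ ω, (μ (Tkn n k)).toReal * (x ((k:ℝ)/n) 1 ω - x (((k:ℝ) - 1)/n) 1 ω) ∂P
          = (μ (Tkn n k)).toReal * (1/n) := by
      intro k _
      rw [MeasureTheory.integral_const_mul, hEΔ]
    rw [Finset.sum_congr rfl h1, ← Finset.sum_mul,
      ← ENNReal.toReal_sum (fun k _ => measure_ne_top μ _), sum_measure_Tkn μ hn,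
      ENNReal.toReal_one, one_mul]
  have hμae : ∀ᵐ u ∂μ, u ∈ Set.Icc (0:ℝ) 1 := by
    rw [ae_iff]
    exact hsupp
  -- the pointwise (in ω) Wasserstein bound
  have hae : ∀ᵐ ω ∂P, W1 (lam ω) (lamn ω) ≤ Y ω := by
    filter_upwards [hx.mono] with ω hmono
    have hφmono : Monotone (fun u => x u 1 ω) := fun u v huv => hmono u v huv 1
    have hφmeas : Measurable (fun u => x u 1 ω) := hφmono.measurable
    have hgmeas : Measurable
        (fun u : ℝ => x ((2 * ((knn n u : ℕ):ℝ) - 1) / (2 * (n:ℝ))) 1 ω) :=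
      hφmeas.comp ((measurable_from_nat
        (f := fun k : ℕ => (2 * (k:ℝ) - 1) / (2 * (n:ℝ)))).comp (knn_measurable n))
    have hFmeas : Measurable (fun u : ℝ =>
        (x u 1 ω, x ((2 * ((knn n u : ℕ):ℝ) - 1) / (2 * (n:ℝ))) 1 ω)) :=
      hφmeas.prodMk hgmeas
    set κ : Measure (ℝ × ℝ) := μ.map (fun u : ℝ =>
        (x u 1 ω, x ((2 * ((knn n u : ℕ):ℝ) - 1) / (2 * (n:ℝ))) 1 ω)) with hκ
    haveI : IsProbabilityMeasure κ := Measure.isProbabilityMeasure_map hFmeas.aemeasurable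
    have hfst : κ.map Prod.fst = lam ω := by
      rw [hκ, Measure.map_map measurable_fst hFmeas, hlam ω]
      rfl
    have hsnd : κ.map Prod.snd = lamn ω := by
      rw [hκ, Measure.map_map measurable_snd hFmeas, hlamn ω]
      exact map_marginal μ hsupp hn _ hφmeas
    have hbdd : BddBelow {r : ℝ | ∃ κ' : Measure (ℝ × ℝ), IsProbabilityMeasure κ' ∧
        κ'.map Prod.fst = lam ω ∧ κ'.map Prod.snd = lamn ω ∧
        r = ∫ p, |p.1 - p.2| ∂κ'} := by
      refine ⟨0, ?_⟩
      rintro r ⟨κ', _, _, _, rfl⟩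
      exact integral_nonneg fun p => abs_nonneg _
    have hW1le : W1 (lam ω) (lamn ω) ≤ ∫ p : ℝ × ℝ, |p.1 - p.2| ∂κ :=
      csInf_le hbdd ⟨κ, ‹_›, hfst, hsnd, rfl⟩
    have hκint : (∫ p : ℝ × ℝ, |p.1 - p.2| ∂κ)
        = ∫ u, |x u 1 ω - x ((2 * ((knn n u : ℕ):ℝ) - 1) / (2 * (n:ℝ))) 1 ω| ∂μ := by
      rw [hκ, integral_map hFmeas.aemeasurable (f := fun p : ℝ × ℝ => |p.1 - p.2|)
        ((continuous_fst.sub continuous_snd).abs.aestronglyMeasurable)]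
    set S : ℝ → ℝ := fun u => ∑ k ∈ Finset.Icc 1 n,
      Set.indicator (Tkn n k)
        (fun _ => x ((k:ℝ)/(n:ℝ)) 1 ω - x (((k:ℝ) - 1)/(n:ℝ)) 1 ω) u with hS
    have hSint : Integrable S μ :=
      integrable_finset_sum _ fun k _ => (integrable_const _).indicator (Tkn_measurable n k)
    have hptle : ∀ᵐ u ∂μ,
        |x u 1 ω - x ((2 * ((knn n u : ℕ):ℝ) - 1) / (2 * (n:ℝ))) 1 ω| ≤ S u := by
      filter_upwards [hμae] with u hu
      have hk0 : knn n u ∈ Finset.Icc 1 n :=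
        Finset.mem_Icc.mpr ⟨knn_one_le hn u, knn_le n u⟩
      have hSu : S u = x (((knn n u : ℕ):ℝ)/(n:ℝ)) 1 ω
          - x ((((knn n u : ℕ):ℝ) - 1)/(n:ℝ)) 1 ω := by
        simp only [hS]
        have h0 : ∀ k ∈ Finset.Icc 1 n, k ≠ knn n u →
            Set.indicator (Tkn n k)
              (fun _ => x ((k:ℝ)/(n:ℝ)) 1 ω - x (((k:ℝ) - 1)/(n:ℝ)) 1 ω) u = 0 := by
          intro k _ hne
          apply Set.indicator_of_notMem
          intro hmem
          exact hne (Set.mem_singleton_iff.mp hmem).symm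
        rw [Finset.sum_eq_single_of_mem (knn n u) hk0 h0]
        have hmem : u ∈ Tkn n (knn n u) := rfl
        rw [Set.indicator_of_mem hmem]
      rw [hSu]
      obtain ⟨ha, hb⟩ := knn_bounds hn hu
      have hga : (((knn n u : ℕ):ℝ) - 1)/(n:ℝ)
          ≤ (2 * ((knn n u : ℕ):ℝ) - 1) / (2 * (n:ℝ)) := by
        rw [div_le_div_iff₀ hn0 (by positivity)]
        nlinarith
      have hgb : (2 * ((knn n u : ℕ):ℝ) - 1) / (2 * (n:ℝ))
          ≤ ((knn n u : ℕ):ℝ)/(n:ℝ) := by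
        rw [div_le_div_iff₀ (by positivity) hn0]
        nlinarith
      have m1 := hmono u (((knn n u : ℕ):ℝ)/(n:ℝ)) hb 1
      have m2 := hmono ((((knn n u : ℕ):ℝ) - 1)/(n:ℝ)) u ha 1
      have m3 := hmono _ _ hga 1
      have m4 := hmono _ _ hgb 1
      rw [abs_sub_le_iff]
      constructor <;> linarith
    have hrS : (∫ u, |x u 1 ω - x ((2 * ((knn n u : ℕ):ℝ) - 1) / (2 * (n:ℝ))) 1 ω| ∂μ)
        ≤ ∫ u, S u ∂μ :=
      integral_mono_of_nonneg (Filter.Eventually.of_forall fun u => abs_nonneg _) hSint hptle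
    have hSY : ∫ u, S u ∂μ = Y ω := by
      simp only [hS, hY]
      rw [integral_finset_sum _ fun k _ => (integrable_const _).indicator (Tkn_measurable n k)]
      refine Finset.sum_congr rfl fun k _ => ?_
      rw [integral_indicator_const _ (Tkn_measurable n k), smul_eq_mul]
      rfl
    calc W1 (lam ω) (lamn ω) ≤ ∫ p : ℝ × ℝ, |p.1 - p.2| ∂κ := hW1le
      _ = _ := hκint
      _ ≤ ∫ u, S u ∂μ := hrS
      _ = Y ω := hSY
  have h1 : ∫ ω, W1 (lam ω) (lamn ω) ∂P
      ≤ Real.sqrt (64 / (3 * Real.sqrt (2 * π)) + 1 / 4) / Real.sqrt n := by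
    calc ∫ ω, W1 (lam ω) (lamn ω) ∂P ≤ ∫ ω, Y ω ∂P :=
          integral_mono_of_nonneg (Filter.Eventually.of_forall fun ω => W1_nonneg _ _) hYint hae
      _ = 1/n := hEY
      _ ≤ _ := hbound
  refine ⟨h1, ?_⟩
  have hpm : Measurable (fun ω => (lam ω, lamn ω)) := hlam_meas.prodMk hlamn_meas
  haveI : IsProbabilityMeasure (P.map (fun ω => (lam ω, lamn ω))) :=
    Measure.isProbabilityMeasure_map hpm.aemeasurable
  have hbdd2 : BddBelow {r : ℝ | ∃ κ : Measure (Measure ℝ × Measure ℝ),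
      IsProbabilityMeasure κ ∧ κ.map Prod.fst = P.map lam ∧ κ.map Prod.snd = P.map lamn ∧
      r = ∫ p, W1 p.1 p.2 ∂κ} := by
    refine ⟨0, ?_⟩
    rintro r ⟨κ, _, _, _, rfl⟩
    exact integral_nonneg fun p => W1_nonneg _ _
  have hmem : (∫ p, W1 p.1 p.2 ∂(P.map (fun ω => (lam ω, lamn ω)))) ∈
      {r : ℝ | ∃ κ : Measure (Measure ℝ × Measure ℝ),
      IsProbabilityMeasure κ ∧ κ.map Prod.fst = P.map lam ∧ κ.map Prod.snd = P.map lamn ∧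
      r = ∫ p, W1 p.1 p.2 ∂κ} := by
    refine ⟨P.map (fun ω => (lam ω, lamn ω)), ‹_›, ?_, ?_, rfl⟩
    · rw [Measure.map_map measurable_fst hpm]
      rfl
    · rw [Measure.map_map measurable_snd hpm]
      rfl
  calc Wcost W1 (P.map lam) (P.map lamn)
      ≤ ∫ p, W1 p.1 p.2 ∂(P.map (fun ω => (lam ω, lamn ω))) := csInf_le hbdd2 hmem
    _ = ∫ ω, W1 (lam ω) (lamn ω) ∂P := by rw [integral_map hpm.aemeasurable hW1meas]
    _ ≤ _ := h1


end
end
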